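/- Let u be an arithmetic sequence, I a translation invariant free ideal of ℕ, and B ⊆ ℕ. Then there exists x ∈ [0,1) with supp(x) ⊆ B such that u_n x does not I-converge to 0 in ℝ/ℤ, if and only if B ∉ I. -/

import Mathlib

open Finset Filter Topology

namespace Stmt17

variable {u b c : ℕ → ℕ}

lemma upos (hu0 : u 0 = 1) (humono : StrictMono u) : ∀ n, 0 < u n := fun n =>
  lt_of_lt_of_le (by omega) (hu0 ▸ humono.monotone (Nat.zero_le n))

lemma uge (hu0 : u 0 = 1) (humono : StrictMono u) : ∀ n, n + 1 ≤ u n := by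
  intro n
  induction n with
  | zero => omega
  | succ m ih => have := humono (by omega : m < m + 1); omega

lemma hb2 (hu0 : u 0 = 1) (humono : StrictMono u)
    (hb : ∀ n, u (n + 1) = b (n + 1) * u n) : ∀ n, 2 ≤ b (n + 1) := by
  intro n
  have h1 := humono (Nat.lt_succ_self n)
  have h2 := upos hu0 humono n
  rw [hb n] at h1
  rcases Nat.lt_or_ge (b (n + 1)) 2 with h | h
  · interval_cases (b (n + 1)) <;> omega
  · exact h

lemma ugrow (hu0 : u 0 = 1) (humono : StrictMono u)
    (hb : ∀ n, u (n + 1) = b (n + 1) * u n) : ∀ n j, u n * 2 ^ j ≤ u (n + j) := by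
  intro n j
  induction j with
  | zero => simp
  | succ m ih =>
      have h2 := hb2 hu0 humono hb (n + m)
      have : u (n + m + 1) = b (n + m + 1) * u (n + m) := hb (n + m)
      calc u n * 2 ^ (m + 1) = (u n * 2 ^ m) * 2 := by ring
        _ ≤ u (n + m) * 2 := by omega
        _ ≤ b (n + m + 1) * u (n + m) := by nlinarith [upos hu0 humono (n+m)]
        _ = u (n + (m + 1)) := (hb (n + m)).symm

lemma udvd (hb : ∀ n, u (n + 1) = b (n + 1) * u n) : ∀ k n, k ≤ n → u k ∣ u n := by
  intro k n hkn
  induction n with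
  | zero => interval_cases k; exact dvd_rfl
  | succ m ih =>
      rcases Nat.lt_or_ge k (m + 1) with h | h
      · exact (ih (by omega)).trans ⟨b (m + 1), by rw [hb m]; ring⟩
      · have : k = m + 1 := by omega
        rw [this]

lemma hSumTel (hu0 : u 0 = 1) (humono : StrictMono u) (n : ℕ) :
    HasSum (fun j => (1 : ℝ) / u (n + j) - 1 / u (n + j + 1)) (1 / u n) := by
  have hpos : ∀ m, (0:ℝ) < u m := fun m => by exact_mod_cast upos hu0 humono m
  rw [hasSum_iff_tendsto_nat_of_nonneg]
  · have hps : ∀ N, ∑ j ∈ Finset.range N, ((1:ℝ) / u (n + j) - 1 / u (n + j + 1))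
        = 1 / u n - 1 / u (n + N) := by
      intro N
      simpa [add_assoc] using Finset.sum_range_sub' (fun j => (1:ℝ) / u (n + j)) N
    simp_rw [hps]
    have h0 : Tendsto (fun N : ℕ => (1:ℝ) / u (n + N)) atTop (𝓝 0) := by
      apply squeeze_zero (fun N => by positivity) (g := fun N : ℕ => 1 / ((N:ℝ) + 1))
      · intro N
        apply one_div_le_one_div_of_le (by positivity)
        have := uge hu0 humono (n + N)
        have : (N:ℝ) + 1 ≤ ((n + N + 1 : ℕ) : ℝ) := by push_cast; linarith
        calc (N:ℝ) + 1 ≤ ((n + N + 1 : ℕ) : ℝ) := this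
          _ ≤ u (n + N) := by exact_mod_cast uge hu0 humono (n + N)
      · exact tendsto_one_div_add_atTop_nhds_zero_nat
    simpa using tendsto_const_nhds.sub h0
  · intro j
    have h1 : u (n + j) ≤ u (n + j + 1) := (humono (Nat.lt_succ_self (n + j))).le
    have : (1:ℝ) / u (n + j + 1) ≤ 1 / u (n + j) :=
      one_div_le_one_div_of_le (hpos _) (by exact_mod_cast h1)
    linarith

lemma Gform (hu0 : u 0 = 1) (humono : StrictMono u)
    (hb : ∀ n, u (n + 1) = b (n + 1) * u n) (m : ℕ) :
    ((b (m + 1) : ℝ) - 1) / u (m + 1) = 1 / u m - 1 / u (m + 1) := by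
  have hpos : ∀ k, (0:ℝ) < u k := fun k => by exact_mod_cast upos hu0 humono k
  have hbpos : (0:ℝ) < b (m + 1) := by
    have := hb2 hu0 humono hb m; positivity
  have h1 : (u (m + 1) : ℝ) = b (m + 1) * u m := by exact_mod_cast hb m
  have hu : (u m : ℝ) ≠ 0 := ne_of_gt (hpos m)
  have hbn : (b (m + 1) : ℝ) ≠ 0 := ne_of_gt hbpos
  rw [h1]
  field_simp

lemma hSumG (hu0 : u 0 = 1) (humono : StrictMono u)
    (hb : ∀ n, u (n + 1) = b (n + 1) * u n) (n : ℕ) :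
    HasSum (fun j => ((b (n + j + 1) : ℝ) - 1) / u (n + j + 1)) (1 / u n) := by
  have := hSumTel hu0 humono n
  refine HasSum.congr_fun this fun j => ?_
  exact Gform hu0 humono hb (n + j)


noncomputable def tailS (u c : ℕ → ℕ) (n : ℕ) : ℝ :=
  ∑' j : ℕ, (c (n + j + 1) : ℝ) / u (n + j + 1)

section Digits

variable (hu0 : u 0 = 1) (humono : StrictMono u)
  (hb : ∀ n, u (n + 1) = b (n + 1) * u n)
  (hc : ∀ n, c (n + 1) < b (n + 1))
include hu0 humono hb hc

lemma tail_summable (n : ℕ) :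
    Summable (fun j => (c (n + j + 1) : ℝ) / u (n + j + 1)) := by
  refine Summable.of_nonneg_of_le (fun j => by positivity)
    (fun j => ?_) (hSumG hu0 humono hb n).summable
  have hpos : (0:ℝ) < u (n + j + 1) := by exact_mod_cast upos hu0 humono (n + j + 1)
  have h1 : (c (n + j + 1) : ℝ) ≤ (b (n + j + 1) : ℝ) - 1 := by
    have h2 : c (n + j + 1) + 1 ≤ b (n + j + 1) := hc (n + j)
    have h3 := (Nat.cast_le (α := ℝ)).mpr h2
    push_cast at h3; linarith
  gcongr

lemma tailS_nonneg (n : ℕ) : 0 ≤ tailS u c n :=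
  tsum_nonneg fun j => by positivity

lemma tailS_le (n : ℕ) : tailS u c n ≤ 1 / u n := by
  have h := (hSumG hu0 humono hb n).tsum_eq
  rw [tailS, ← h]
  refine Summable.tsum_le_tsum (fun j => ?_) (tail_summable hu0 humono hb hc n)
    (hSumG hu0 humono hb n).summable
  have hpos : (0:ℝ) < u (n + j + 1) := by exact_mod_cast upos hu0 humono (n + j + 1)
  have h1 : (c (n + j + 1) : ℝ) ≤ (b (n + j + 1) : ℝ) - 1 := by
    have h2 : c (n + j + 1) + 1 ≤ b (n + j + 1) := hc (n + j)
    have h3 := (Nat.cast_le (α := ℝ)).mpr h2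
    push_cast at h3; linarith
  gcongr

lemma tailS_succ (n : ℕ) :
    tailS u c n = (c (n + 1) : ℝ) / u (n + 1) + tailS u c (n + 1) := by
  rw [tailS, Summable.tsum_eq_zero_add (tail_summable hu0 humono hb hc n)]
  have h2 : (fun j => (c (n + (j + 1) + 1) : ℝ) / u (n + (j + 1) + 1))
      = fun j => (c (n + 1 + j + 1) : ℝ) / u (n + 1 + j + 1) := by
    funext j
    have h3 : n + (j + 1) + 1 = n + 1 + j + 1 := by omega
    rw [h3]
  rw [h2]
  rfl

lemma tailS_prefix (n : ℕ) :
    tailS u c 0 = (∑ k ∈ Finset.range n, (c (k + 1) : ℝ) / u (k + 1)) + tailS u c n := by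
  induction n with
  | zero => simp
  | succ m ih =>
      rw [Finset.sum_range_succ, ih, tailS_succ hu0 humono hb hc m]
      ring

lemma tailS_window (n m : ℕ) (hnm : n ≤ m)
    (h0 : ∀ k, n < k → k ≤ m → c k = 0) : tailS u c n = tailS u c m := by
  induction m with
  | zero => interval_cases n; rfl
  | succ p ih =>
      rcases Nat.lt_or_ge n (p + 1) with h | h
      · have h1 : tailS u c n = tailS u c p :=
          ih (by omega) (fun k hk1 hk2 => h0 k hk1 (by omega))
        rw [h1, tailS_succ hu0 humono hb hc p, h0 (p + 1) (by omega) (le_refl _)]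
        norm_num
      · have : n = p + 1 := by omega
        rw [this]

lemma exists_int (n : ℕ) :
    ∃ M : ℤ, (u n : ℝ) * tailS u c 0 = M + (u n : ℝ) * tailS u c n := by
  refine ⟨((∑ k ∈ Finset.range n, c (k + 1) * (u n / u (k + 1)) : ℕ) : ℤ), ?_⟩
  rw [tailS_prefix hu0 humono hb hc n, mul_add]
  congr 1
  rw [Finset.mul_sum, Int.cast_natCast, Nat.cast_sum]
  refine Finset.sum_congr rfl fun k hk => ?_
  have hkn : k + 1 ≤ n := Finset.mem_range.mp hk
  have hdvd := udvd hb (k + 1) n hkn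
  rw [Nat.cast_mul,
    Nat.cast_div hdvd (by exact_mod_cast ne_of_gt (upos hu0 humono (k + 1)))]
  ring

end Digits

end Stmt17
set_option maxHeartbeats 1000000 in
/-- Corollary 2.14: for an arithmetic sequence `u` and a translation invariant proper free
ideal `I`, there exists `x ∈ [0,1)` with `supp(x) ⊆ B` such that `u_n x` does not
`I`-converge to `0` mod `1`, if and only if `B ∉ I`. -/
theorem stmt_17 (u b : ℕ → ℕ)
    (hu0 : u 0 = 1) (humono : StrictMono u)
    (hb : ∀ n, u (n + 1) = b (n + 1) * u n)
    (I : Set (Set ℕ))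
    (hne : I.Nonempty)
    (hunion : ∀ A B : Set ℕ, A ∈ I → B ∈ I → A ∪ B ∈ I)
    (hsubset : ∀ A B : Set ℕ, A ⊆ B → B ∈ I → A ∈ I)
    (hfree : ∀ A : Set ℕ, A.Finite → A ∈ I)
    (hproper : Set.univ ∉ I)
    (htrans : ∀ A ∈ I, ∀ z : ℤ, {m : ℕ | ∃ a ∈ A, (a : ℤ) + z = (m : ℤ)} ∈ I)
    (B : Set ℕ) :
    (∃ x : ℝ, ∃ c : ℕ → ℕ, 0 ≤ x ∧ x < 1 ∧ c 0 = 0 ∧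
      x = ∑' n : ℕ, (c (n + 1) : ℝ) / (u (n + 1) : ℝ) ∧
      (∀ n, c (n + 1) < b (n + 1)) ∧
      {n : ℕ | c (n + 1) + 1 < b (n + 1)}.Infinite ∧
      {n : ℕ | c n ≠ 0} ⊆ B ∧
      ¬ ∀ ε : ℝ, 0 < ε →
        {n : ℕ | ε ≤ |(u n : ℝ) * x - (round ((u n : ℝ) * x) : ℝ)|} ∈ I) ↔
    B ∉ I := by
  classical
  have hupos : ∀ n, 0 < u n := Stmt17.upos hu0 humono
  have huposR : ∀ n, (0:ℝ) < u n := fun n => by exact_mod_cast hupos n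
  have hb2 : ∀ n, 2 ≤ b (n + 1) := Stmt17.hb2 hu0 humono hb
  constructor
  · rintro ⟨x, c, hx0, hx1, hc0, hxeq, hclt, hcinf, hsupp, hnconv⟩ hBI
    apply hnconv
    intro ε hε
    have hxS : x = Stmt17.tailS u c 0 := by
      rw [hxeq, Stmt17.tailS]
      exact tsum_congr fun j => by rw [Nat.zero_add]
    obtain ⟨N, hN⟩ := exists_pow_lt_of_lt_one hε (by norm_num : (1/2 : ℝ) < 1)
    have hIunion : ∀ (s : Finset ℕ) (f : ℕ → Set ℕ), (∀ j ∈ s, f j ∈ I) →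
        (⋃ j ∈ s, f j) ∈ I := by
      intro s
      induction s using Finset.induction_on with
      | empty => intro f _; simpa using hfree ∅ Set.finite_empty
      | @insert a s ha ih =>
          intro f hf
          rw [Finset.set_biUnion_insert]
          exact hunion _ _ (hf _ (Finset.mem_insert_self _ _))
            (ih f fun j hj => hf j (Finset.mem_insert_of_mem hj))
    refine hsubset _
      (⋃ j ∈ Finset.Icc 1 (N + 1), {m : ℕ | ∃ a ∈ B, (a : ℤ) + (-(j:ℤ)) = (m:ℤ)}) ?_ ?_
    · intro n hn
      simp only [Set.mem_setOf_eq] at hn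
      obtain ⟨M, hM⟩ := Stmt17.exists_int hu0 humono hb hclt n
      have htnn : 0 ≤ Stmt17.tailS u c n := Stmt17.tailS_nonneg hu0 humono hb hclt n
      have hub : |(u n:ℝ) * x - ((round ((u n:ℝ) * x) : ℤ) : ℝ)|
          ≤ (u n:ℝ) * Stmt17.tailS u c n := by
        have h1 := round_le ((u n:ℝ) * x) M
        have h2 : (u n:ℝ) * x - M = (u n:ℝ) * Stmt17.tailS u c n := by
          rw [hxS, hM]; ring
        calc |(u n:ℝ) * x - ((round ((u n:ℝ) * x) : ℤ) : ℝ)|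
            ≤ |(u n:ℝ) * x - (M:ℝ)| := h1
          _ = (u n:ℝ) * Stmt17.tailS u c n := by
              rw [h2, abs_of_nonneg (mul_nonneg (huposR n).le htnn)]
      have hε' : ε ≤ (u n:ℝ) * Stmt17.tailS u c n := le_trans hn hub
      have hwin : ¬ (∀ k, n < k → k ≤ n + (N + 1) → c k = 0) := by
        intro hz
        have h1 : Stmt17.tailS u c n = Stmt17.tailS u c (n + (N + 1)) :=
          Stmt17.tailS_window hu0 humono hb hclt n (n + (N + 1)) (by omega) hz
        have h2 : Stmt17.tailS u c (n + (N + 1)) ≤ 1 / u (n + (N + 1)) :=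
          Stmt17.tailS_le hu0 humono hb hclt (n + (N + 1))
        have h4 : (u n : ℝ) * 2 ^ (N + 1) ≤ (u (n + (N + 1)) : ℝ) := by
          exact_mod_cast Stmt17.ugrow hu0 humono hb n (N + 1)
        have h5 : (u n:ℝ) * (1 / u (n + (N + 1))) ≤ (1/2 : ℝ) ^ (N + 1) := by
          rw [mul_one_div, div_pow, one_pow, div_le_div_iff₀ (huposR _) (by positivity)]
          nlinarith [h4]
        have h6 : (1/2 : ℝ) ^ (N + 1) < ε := by
          have h7 : (1/2 : ℝ) ^ (N + 1) ≤ (1/2 : ℝ) ^ N :=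
            pow_le_pow_of_le_one (by norm_num) (by norm_num) (by omega)
          linarith
        have h8 : (u n:ℝ) * Stmt17.tailS u c n ≤ (1/2 : ℝ) ^ (N + 1) := by
          rw [h1]
          calc (u n:ℝ) * Stmt17.tailS u c (n + (N + 1))
              ≤ (u n:ℝ) * (1 / u (n + (N + 1))) :=
                mul_le_mul_of_nonneg_left h2 (huposR n).le
            _ ≤ (1/2 : ℝ) ^ (N + 1) := h5
        linarith
      push_neg at hwin
      obtain ⟨k, hk1, hk2, hk3⟩ := hwin
      have hkB : k ∈ B := hsupp hk3
      refine Set.mem_biUnion (Finset.mem_Icc.mpr ⟨by omega, by omega⟩)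
        (show n ∈ {m : ℕ | ∃ a ∈ B, (a : ℤ) + (-((k - n : ℕ):ℤ)) = (m:ℤ)} from ?_)
      exact ⟨k, hkB, by omega⟩
    · exact hIunion _ _ fun j hj => htrans B hBI (-(j:ℤ))
  · intro hBnotI
    have hex : ∃ r, r < 2 ∧ {m | m ∈ B ∧ 1 ≤ m ∧ m % 2 = r} ∉ I := by
      by_contra hcon
      push_neg at hcon
      have h0 := hcon 0 (by omega)
      have h1 := hcon 1 (by omega)
      apply hBnotI
      refine hsubset B (({m | m ∈ B ∧ 1 ≤ m ∧ m % 2 = 0} ∪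
        {m | m ∈ B ∧ 1 ≤ m ∧ m % 2 = 1}) ∪ {0}) ?_
        (hunion _ _ (hunion _ _ h0 h1) (hfree {0} (Set.finite_singleton 0)))
      intro m hm
      rcases Nat.eq_zero_or_pos m with h | h
      · right; simp [h]
      · left
        rcases Nat.mod_two_eq_zero_or_one m with h2 | h2
        · left; exact ⟨hm, h, h2⟩
        · right; exact ⟨hm, h, h2⟩
    obtain ⟨r, hr2, hB'⟩ := hex
    set B' : Set ℕ := {m | m ∈ B ∧ 1 ≤ m ∧ m % 2 = r} with hB'def
    set c : ℕ → ℕ := fun k => if k ∈ B' then b k / 2 else 0 with hcdef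
    have hcB' : ∀ k, k ∈ B' → c k = b k / 2 := fun k hk => by simp [hcdef, hk]
    have hcnB' : ∀ k, k ∉ B' → c k = 0 := fun k hk => by simp [hcdef, hk]
    have hclt : ∀ n, c (n + 1) < b (n + 1) := by
      intro n
      have := hb2 n
      by_cases h : (n + 1) ∈ B'
      · rw [hcB' _ h]; omega
      · rw [hcnB' _ h]; omega
    set x : ℝ := Stmt17.tailS u c 0 with hxdef
    have hxeq : x = ∑' n : ℕ, (c (n + 1) : ℝ) / u (n + 1) := by
      rw [hxdef, Stmt17.tailS]
      exact tsum_congr fun j => by rw [Nat.zero_add]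
    have hS1 : HasSum (fun j => ((b (j + 1) : ℝ) - 1) / u (j + 1)) 1 := by
      have h := (Stmt17.hSumG hu0 humono hb 0).congr_fun
        (fun j => by rw [Nat.zero_add])
      simpa [hu0] using h
    refine ⟨x, c, Stmt17.tailS_nonneg hu0 humono hb hclt 0, ?_, ?_, hxeq, hclt, ?_, ?_, ?_⟩
    · -- x < 1
      rw [hxeq, ← hS1.tsum_eq]
      refine Summable.tsum_lt_tsum_of_nonneg (i := r) (fun j => by positivity)
        (fun j => ?_) ?_ hS1.summable
      · have h1 : (c (j + 1) : ℝ) ≤ (b (j + 1) : ℝ) - 1 := by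
          have h2 : c (j + 1) + 1 ≤ b (j + 1) := hclt j
          have h3 := (Nat.cast_le (α := ℝ)).mpr h2
          push_cast at h3; linarith
        gcongr
      · have hnB : (r + 1) ∉ B' := by
          intro hmem
          have := hmem.2.2
          omega
        rw [hcnB' _ hnB]
        have hbr := hb2 r
        have hbrR : (2:ℝ) ≤ b (r + 1) := by exact_mod_cast hbr
        have hpos : (0:ℝ) < ((b (r + 1) : ℝ) - 1) / u (r + 1) := by
          apply div_pos (by linarith) (huposR (r + 1))
        simpa using hpos
    · exact hcnB' 0 (by intro hmem; have := hmem.2.1; omega)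
    · -- infinitely many non-maximal digits
      apply Set.infinite_of_injective_forall_mem (f := fun k : ℕ => 2 * k + r)
        (fun a a' h => by dsimp only at h; omega)
      intro k
      simp only [Set.mem_setOf_eq]
      have hnB : (2 * k + r + 1) ∉ B' := by
        intro hmem
        have := hmem.2.2
        omega
      rw [hcnB' _ hnB]
      have := hb2 (2 * k + r)
      omega
    · -- support contained in B
      intro n hn
      by_cases h : n ∈ B'
      · exact h.1
      · exact absurd (hcnB' n h) hn
    · -- non-convergence
      intro hconv
      have hD := hconv (1/4) (by norm_num)
      have hsub : {n : ℕ | n + 1 ∈ B'} ⊆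
          {n : ℕ | 1/4 ≤ |(u n : ℝ) * x - ((round ((u n : ℝ) * x) : ℤ) : ℝ)|} := by
        intro n hn
        simp only [Set.mem_setOf_eq] at hn ⊢
        obtain ⟨M, hM⟩ := Stmt17.exists_int hu0 humono hb hclt n
        have hcm : c (n + 1) = b (n + 1) / 2 := hcB' _ hn
        have hsucc := Stmt17.tailS_succ hu0 humono hb hclt n
        have hwin : Stmt17.tailS u c (n + 1) = Stmt17.tailS u c (n + 2) :=
          Stmt17.tailS_window hu0 humono hb hclt (n + 1) (n + 2) (by omega)
            (fun k hk1 hk2 => by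
              have hk : k = n + 2 := by omega
              rw [hk]
              refine hcnB' _ (fun hmem => ?_)
              have h1 := hn.2.2
              have h2 := hmem.2.2
              omega)
        have humeq : (u (n + 1) : ℝ) = (b (n + 1) : ℝ) * u n := by exact_mod_cast hb n
        have hum1eq : (u (n + 2) : ℝ) = (b (n + 2) : ℝ) * ((b (n + 1) : ℝ) * u n) := by
          rw [← humeq]; exact_mod_cast hb (n + 1)
        have hbmR : (2:ℝ) ≤ b (n + 1) := by exact_mod_cast hb2 n
        have hbm1R : (2:ℝ) ≤ b (n + 2) := by exact_mod_cast hb2 (n + 1)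
        have hbmpos : (0:ℝ) < b (n + 1) := by linarith
        have hunne : (u n : ℝ) ≠ 0 := ne_of_gt (huposR n)
        have hbmne : (b (n + 1) : ℝ) ≠ 0 := ne_of_gt hbmpos
        have hbm1ne : (b (n + 2) : ℝ) ≠ 0 := by linarith
        have hRnn : 0 ≤ (u n : ℝ) * Stmt17.tailS u c (n + 2) :=
          mul_nonneg (huposR n).le (Stmt17.tailS_nonneg hu0 humono hb hclt (n + 2))
        have hTeq : (u n : ℝ) * Stmt17.tailS u c n
            = (c (n + 1) : ℝ) / b (n + 1) + (u n : ℝ) * Stmt17.tailS u c (n + 2) := by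
          rw [hsucc, hwin, mul_add]
          congr 1
          rw [humeq]
          field_simp
        have hcm3 : b (n + 1) ≤ 3 * (b (n + 1) / 2) := by
          have := hb2 n; omega
        have hlow : 1/3 ≤ (c (n + 1) : ℝ) / b (n + 1) := by
          rw [hcm, le_div_iff₀ hbmpos]
          have h3 : ((b (n + 1) : ℕ) : ℝ) ≤ 3 * ((b (n + 1) / 2 : ℕ) : ℝ) := by
            exact_mod_cast hcm3
          linarith
        have hR1 : (u n : ℝ) * Stmt17.tailS u c (n + 2)
            ≤ (u n : ℝ) * (1 / u (n + 2)) :=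
          mul_le_mul_of_nonneg_left
            (Stmt17.tailS_le hu0 humono hb hclt (n + 2)) (huposR n).le
        have hR2 : (u n : ℝ) * (1 / u (n + 2)) = 1 / ((b (n + 2) : ℝ) * b (n + 1)) := by
          rw [hum1eq]
          field_simp
        have hR3 : (1:ℝ) / ((b (n + 2) : ℝ) * b (n + 1)) ≤ 1 / (2 * (b (n + 1) : ℝ)) := by
          apply one_div_le_one_div_of_le (by positivity)
          nlinarith
        have hub : (c (n + 1) : ℝ) / b (n + 1) + 1 / (2 * (b (n + 1) : ℝ)) ≤ 3/4 := by
          rw [hcm]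
          have key : 4 * ((b (n + 1) / 2 : ℕ) : ℝ) + 2 ≤ 3 * ((b (n + 1) : ℕ) : ℝ) := by
            exact_mod_cast (show 4 * (b (n + 1) / 2) + 2 ≤ 3 * b (n + 1) by
              have := hb2 n; omega)
          rw [div_add_div _ _ hbmne (by positivity),
            div_le_div_iff₀ (by positivity) (by norm_num)]
          nlinarith [hbmpos, key]
        have hTlow : 1/3 ≤ (u n : ℝ) * Stmt17.tailS u c n := by
          rw [hTeq]; linarith
        have hThigh : (u n : ℝ) * Stmt17.tailS u c n ≤ 3/4 := by
          rw [hTeq]; linarith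
        have hMx : (u n : ℝ) * x = M + (u n : ℝ) * Stmt17.tailS u c n := by
          rw [hxdef]; exact hM
        rcases le_or_gt (round ((u n : ℝ) * x)) M with hzM | hzM
        · have hzMR : ((round ((u n : ℝ) * x) : ℤ) : ℝ) ≤ (M : ℝ) := by
            exact_mod_cast hzM
          have h9 : 1/4 ≤ (u n : ℝ) * x - ((round ((u n : ℝ) * x) : ℤ) : ℝ) := by
            linarith [hMx]
          calc (1:ℝ)/4 ≤ (u n : ℝ) * x - ((round ((u n : ℝ) * x) : ℤ) : ℝ) := h9
            _ ≤ |(u n : ℝ) * x - ((round ((u n : ℝ) * x) : ℤ) : ℝ)| := le_abs_self _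
        · have hzMR : (M : ℝ) + 1 ≤ ((round ((u n : ℝ) * x) : ℤ) : ℝ) := by
            exact_mod_cast Int.add_one_le_iff.mpr hzM
          have h9 : 1/4 ≤ ((round ((u n : ℝ) * x) : ℤ) : ℝ) - (u n : ℝ) * x := by
            linarith [hMx]
          calc (1:ℝ)/4 ≤ ((round ((u n : ℝ) * x) : ℤ) : ℝ) - (u n : ℝ) * x := h9
            _ ≤ |(u n : ℝ) * x - ((round ((u n : ℝ) * x) : ℤ) : ℝ)| := by
                rw [abs_sub_comm]; exact le_abs_self _
      have hC : {n : ℕ | n + 1 ∈ B'} ∈ I := hsubset _ _ hsub hD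
      have hCt := htrans _ hC 1
      apply hB'
      refine hsubset _ _ ?_ hCt
      intro m hm
      refine ⟨m - 1, ?_, by have := hm.2.1; omega⟩
      simp only [Set.mem_setOf_eq]
      have h10 : m - 1 + 1 = m := by have := hm.2.1; omega
      rw [h10]
      exact hm
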